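/- Let $G$ be a group, $Q$ a normal subgroup, and $V$ an irreducible $\mathbb{C}[G]$-module. Suppose there exists a character $\vartheta : Q \to \mathbb{C}^\times$ with $V(\vartheta) \ne V$, where $V(\vartheta)$ is spanned by $xv - \vartheta(x)v$ for $x \in Q$, $v \in V$. Then the commutator subgroup $[Q,Q]$ acts trivially on $V$. -/

import Mathlib

/-- The twisted subspace `V(θ^g)` spanned by `x v - θ(g x g⁻¹) v` for `x ∈ Q`. -/
private def Wsub (G : Type*) [Group G] (Q : Subgroup G) (V : Type*) [AddCommGroup V]
    [Module ℂ V] (ρ : Representation ℂ G V) (θ : G → ℂˣ) (g : G) : Submodule ℂ V :=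
  Submodule.span ℂ {w : V | ∃ x ∈ Q, ∃ v : V, w = ρ x v - ((θ (g * x * g⁻¹) : ℂˣ) : ℂ) • v}

/-- Let `Q` be a normal subgroup of `G` and `ρ` an irreducible representation of `G` on a
complex vector space `V`.  If there is a character `θ` of `Q` with
`V(θ) = span{x v - θ(x) v} ≠ V`, then the commutator subgroup `[Q, Q]` acts trivially
on `V`. -/
theorem commutator_acts_trivially_of_V_theta_ne_top
    (G : Type*) [Group G] (Q : Subgroup G) [Q.Normal]
    (V : Type*) [AddCommGroup V] [Module ℂ V]
    (ρ : Representation ℂ G V)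
    (hirr : ∀ W : Submodule ℂ V, (∀ (g : G), ∀ v ∈ W, ρ g v ∈ W) → W = ⊥ ∨ W = ⊤)
    (θ : G → ℂˣ) (hθ : ∀ x ∈ Q, ∀ y ∈ Q, θ (x * y) = θ x * θ y)
    (hne : Submodule.span ℂ {w : V | ∃ x ∈ Q, ∃ v : V, w = ρ x v - (θ x : ℂ) • v} ≠ ⊤) :
    ∀ z ∈ ⁅Q, Q⁆, ∀ v : V, ρ z v = v := by
  have hN : Q.Normal := inferInstance
  -- θ(1) = 1
  have hθ1 : θ 1 = 1 := by
    have h := hθ 1 Q.one_mem 1 Q.one_mem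
    rw [one_mul] at h
    exact right_eq_mul.mp h
  -- θ(x⁻¹) = θ(x)⁻¹ on Q
  have hθinv : ∀ x ∈ Q, θ x⁻¹ = (θ x)⁻¹ := by
    intro x hx
    have h := hθ x hx x⁻¹ (Q.inv_mem hx)
    rw [mul_inv_cancel, hθ1] at h
    exact eq_inv_of_mul_eq_one_right h.symm
  -- the subgroup of Q on which θ is 1
  have hcomm : ∀ z ∈ ⁅Q, Q⁆, z ∈ Q ∧ θ z = 1 := by
    let K : Subgroup G :=
      { carrier := {x | x ∈ Q ∧ θ x = 1}
        one_mem' := ⟨Q.one_mem, hθ1⟩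
        mul_mem' := fun {a b} ha hb =>
          ⟨Q.mul_mem ha.1 hb.1, by rw [hθ a ha.1 b hb.1, ha.2, hb.2, one_mul]⟩
        inv_mem' := fun {a} ha =>
          ⟨Q.inv_mem ha.1, by rw [hθinv a ha.1, ha.2, inv_one]⟩ }
    have hle : ⁅Q, Q⁆ ≤ K := by
      rw [Subgroup.commutator_le]
      intro a ha b hb
      refine ⟨Q.mul_mem (Q.mul_mem (Q.mul_mem ha hb) (Q.inv_mem ha)) (Q.inv_mem hb), ?_⟩
      show θ (a * b * a⁻¹ * b⁻¹) = 1
      rw [hθ _ (Q.mul_mem (Q.mul_mem ha hb) (Q.inv_mem ha)) _ (Q.inv_mem hb),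
        hθ _ (Q.mul_mem ha hb) _ (Q.inv_mem ha), hθ a ha b hb,
        hθinv a ha, hθinv b hb, mul_comm (θ a) (θ b)]
      group
    exact fun z hz => hle hz
  -- the twisted subspaces
  set W : G → Submodule ℂ V := Wsub G Q V ρ θ with hW
  -- ρ g maps W (k * g) into W k
  have mapA : ∀ g k : G, Submodule.map (ρ g) (W (k * g)) ≤ W k := by
    intro g k
    rw [hW, Wsub, Submodule.map_span_le]
    rintro w ⟨x, hx, u, rfl⟩
    have key : ρ g (ρ x u - ((θ (k * g * x * (k * g)⁻¹) : ℂˣ) : ℂ) • u)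
        = ρ (g * x * g⁻¹) (ρ g u)
          - ((θ (k * (g * x * g⁻¹) * k⁻¹) : ℂˣ) : ℂ) • (ρ g u) := by
      have e1 : k * g * x * (k * g)⁻¹ = k * (g * x * g⁻¹) * k⁻¹ := by group
      have e2 : ρ (g * x * g⁻¹) (ρ g u) = ρ g (ρ x u) := by
        rw [← Module.End.mul_apply, ← map_mul, ← Module.End.mul_apply, ← map_mul]
        congr 2
        group
      rw [e1, map_sub, map_smul, e2]
    rw [key]
    exact Submodule.subset_span ⟨g * x * g⁻¹, hN.conj_mem x hx g, ρ g u, rfl⟩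
  -- the intersection V₀
  set V₀ : Submodule ℂ V := ⨅ g : G, W g with hV₀
  have hinv : ∀ g : G, ∀ w ∈ V₀, ρ g w ∈ V₀ := by
    intro g w hw
    rw [hV₀, Submodule.mem_iInf] at hw ⊢
    intro k
    exact mapA g k ⟨w, hw (k * g), rfl⟩
  have hbot : V₀ = ⊥ := by
    rcases hirr V₀ hinv with h | h
    · exact h
    · exfalso
      apply hne
      have hWle : V₀ ≤ W 1 := iInf_le _ 1
      have hW1 : W 1 = Submodule.span ℂ
          {w : V | ∃ x ∈ Q, ∃ v : V, w = ρ x v - ((θ x : ℂˣ) : ℂ) • v} := by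
        rw [hW, Wsub]
        congr 1
        ext w
        simp only [one_mul, inv_one, mul_one]
      rw [← hW1]
      exact top_le_iff.mp (h ▸ hWle)
  -- conclude
  intro z hz v
  obtain ⟨hzQ, -⟩ := hcomm z hz
  have hmem : ∀ g : G, ρ z v - v ∈ W g := by
    intro g
    have hzg : θ (g * z * g⁻¹) = 1 :=
      (hcomm _ ((Subgroup.commutator_normal Q Q).conj_mem z hz g)).2
    have : ρ z v - ((θ (g * z * g⁻¹) : ℂˣ) : ℂ) • v ∈ W g := by
      rw [hW, Wsub]
      exact Submodule.subset_span ⟨z, hzQ, v, rfl⟩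
    rwa [hzg, Units.val_one, one_smul] at this
  have h0 : ρ z v - v ∈ V₀ := by
    rw [hV₀, Submodule.mem_iInf]
    exact hmem
  rw [hbot, Submodule.mem_bot, sub_eq_zero] at h0
  exact h0
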